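/- Fix θ ∈ ℝ, σ > 0 and ω > 0. Let ξ and W be independent standard normal random variables, and define the coupled bootstrap pair Y⁽¹⁾ = θ + σξ + √ω·σW and Y⁽²⁾ = θ + σξ − (σ/√ω)·W. Then the joint law of (Y⁽¹⁾, Y⁽²⁾) — i.e. the pushforward of the product of two standard Gaussian measures on ℝ under the map (ξ, W) ↦ (θ + σξ + √ω σW, θ + σξ − (σ/√ω)W) — equals the product measure N(θ, (1+ω)σ²) ⊗ N(θ, (1+ω⁻¹)σ²). In particular, Y⁽¹⁾ and Y⁽²⁾ are independent, Y⁽¹⁾ ~ N(θ, (1+ω)σ²) and Y⁽²⁾ ~ N(θ, (1+ω⁻¹)σ²). -/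

import Mathlib

open MeasureTheory ProbabilityTheory Real

namespace CoupledBootstrapAux

/-- Map of a `withDensity` measure under a measurable equivalence. -/
lemma map_withDensity_equiv {α β : Type*} [MeasurableSpace α] [MeasurableSpace β]
    (e : α ≃ᵐ β) (μ : Measure α) {f : β → ENNReal} (hf : Measurable f) :
    Measure.map e (μ.withDensity (fun x => f (e x)))
      = (Measure.map e μ).withDensity f := by
  ext s hs
  rw [Measure.map_apply e.measurable hs, withDensity_apply _ (e.measurable hs),
    withDensity_apply _ hs, Measure.restrict_map e.measurable hs,
    lintegral_map hf e.measurable]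

/-- The product of two standard gaussians as a density wrt 2D Lebesgue. -/
lemma gaussian_prod_eq_withDensity :
    (gaussianReal 0 1).prod (gaussianReal 0 1)
      = ((volume : Measure ℝ).prod volume).withDensity
          (fun z => gaussianPDF 0 1 z.1 * gaussianPDF 0 1 z.2) := by
  refine Measure.prod_eq fun s t hs ht => ?_
  rw [withDensity_apply _ (hs.prod ht), ← Measure.prod_restrict,
    lintegral_prod_mul (measurable_gaussianPDF 0 1).aemeasurable
      (measurable_gaussianPDF 0 1).aemeasurable,
    gaussianReal_apply 0 one_ne_zero s, gaussianReal_apply 0 one_ne_zero t]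

lemma gaussianPDF_rot (a b x y : ℝ) (hab : a ^ 2 + b ^ 2 = 1) :
    gaussianPDF 0 1 (a * x + b * y) * gaussianPDF 0 1 (b * x - a * y)
      = gaussianPDF 0 1 x * gaussianPDF 0 1 y := by
  have hnn : ∀ z : ℝ, 0 ≤ gaussianPDFReal 0 1 z := fun z => gaussianPDFReal_nonneg 0 1 z
  simp only [gaussianPDF, ← ENNReal.ofReal_mul (hnn _)]
  congr 1
  simp only [gaussianPDFReal, NNReal.coe_one, mul_one, sub_zero]
  have h1 : (a * x + b * y) ^ 2 + (b * x - a * y) ^ 2 = x ^ 2 + y ^ 2 := by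
    linear_combination (x ^ 2 + y ^ 2) * hab
  have h2 : rexp (-(a * x + b * y) ^ 2 / 2) * rexp (-(b * x - a * y) ^ 2 / 2)
      = rexp (-x ^ 2 / 2) * rexp (-y ^ 2 / 2) := by
    rw [← Real.exp_add, ← Real.exp_add]
    congr 1
    linear_combination (-1 / 2) * h1
  linear_combination (√(2 * π))⁻¹ * (√(2 * π))⁻¹ * h2

/-- Rotation invariance of the 2D standard gaussian. -/
lemma gaussian_rot (a b : ℝ) (hab : a ^ 2 + b ^ 2 = 1) :
    Measure.map (fun p : ℝ × ℝ => (a * p.1 + b * p.2, b * p.1 - a * p.2))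
        ((gaussianReal 0 1).prod (gaussianReal 0 1))
      = (gaussianReal 0 1).prod (gaussianReal 0 1) := by
  set L : (ℝ × ℝ) →ₗ[ℝ] (ℝ × ℝ) :=
    { toFun := fun p => (a * p.1 + b * p.2, b * p.1 - a * p.2)
      map_add' := by intro p q; simp [Prod.ext_iff]; constructor <;> ring
      map_smul' := by intro c p; simp [Prod.ext_iff, smul_eq_mul]; constructor <;> ring }
  have hLL : ∀ p : ℝ × ℝ, L (L p) = p := by
    rintro ⟨x, y⟩
    simp only [L, LinearMap.coe_mk, AddHom.coe_mk, Prod.mk.injEq]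
    constructor
    · linear_combination x * hab
    · linear_combination y * hab
  have hmeas : Measurable (fun p : ℝ × ℝ => (a * p.1 + b * p.2, b * p.1 - a * p.2)) :=
    ((measurable_fst.const_mul a).add (measurable_snd.const_mul b)).prod
      ((measurable_fst.const_mul b).sub (measurable_snd.const_mul a))
  -- the measurable equivalence given by the involution L
  set e : (ℝ × ℝ) ≃ᵐ (ℝ × ℝ) :=
    { toFun := fun p => (a * p.1 + b * p.2, b * p.1 - a * p.2)
      invFun := fun p => (a * p.1 + b * p.2, b * p.1 - a * p.2)
      left_inv := hLL
      right_inv := hLL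
      measurable_toFun := hmeas
      measurable_invFun := hmeas }
  -- |det L| = 1
  have hdet2 : LinearMap.det L * LinearMap.det L = 1 := by
    rw [← LinearMap.det_comp]
    have : L.comp L = LinearMap.id := LinearMap.ext hLL
    rw [this, LinearMap.det_id]
  have hdet0 : LinearMap.det L ≠ 0 := by
    intro h; rw [h, mul_zero] at hdet2; exact zero_ne_one hdet2
  have habs : |(LinearMap.det L)⁻¹| = 1 := by
    rcases mul_self_eq_one_iff.mp hdet2 with h | h <;> rw [h] <;> norm_num
  have hvol : Measure.map (⇑L) (volume : Measure (ℝ × ℝ)) = volume := by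
    rw [Measure.map_linearMap_addHaar_eq_smul_addHaar volume hdet0, habs]
    simp
  have hvol' : Measure.map (⇑e) ((volume : Measure ℝ).prod volume) = volume.prod volume := by
    have : ⇑e = ⇑L := rfl
    rw [this]
    exact hvol
  have hpdf : (fun p : ℝ × ℝ => gaussianPDF 0 1 (e p).1 * gaussianPDF 0 1 (e p).2)
      = fun z : ℝ × ℝ => gaussianPDF 0 1 z.1 * gaussianPDF 0 1 z.2 := by
    funext p
    exact gaussianPDF_rot a b p.1 p.2 hab
  have hfe : (fun p : ℝ × ℝ => (a * p.1 + b * p.2, b * p.1 - a * p.2)) = ⇑e := rfl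
  rw [hfe, gaussian_prod_eq_withDensity, ← hpdf,
    map_withDensity_equiv e _
      (f := fun z : ℝ × ℝ => gaussianPDF 0 1 z.1 * gaussianPDF 0 1 z.2)
      (((measurable_gaussianPDF 0 1).comp measurable_fst).mul
        ((measurable_gaussianPDF 0 1).comp measurable_snd)),
    hvol', hpdf]

end CoupledBootstrapAux

open CoupledBootstrapAux

/-- Coupled bootstrap: if `ξ, W` are independent standard normals and
`Y⁽¹⁾ = θ + σξ + √ω σW`, `Y⁽²⁾ = θ + σξ − (σ/√ω) W`, then `(Y⁽¹⁾, Y⁽²⁾)` are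
independent with `Y⁽¹⁾ ~ N(θ, (1+ω)σ²)` and `Y⁽²⁾ ~ N(θ, (1+ω⁻¹)σ²)`. -/
theorem coupled_bootstrap_law
    (θ σ ω : ℝ) (hσ : 0 < σ) (hω : 0 < ω) :
    Measure.map
        (fun p : ℝ × ℝ =>
          (θ + σ * p.1 + Real.sqrt ω * σ * p.2,
           θ + σ * p.1 - (σ / Real.sqrt ω) * p.2))
        ((gaussianReal 0 1).prod (gaussianReal 0 1))
      = (gaussianReal θ (((1 + ω) * σ ^ 2).toNNReal)).prod
          (gaussianReal θ (((1 + ω⁻¹) * σ ^ 2).toNNReal)) := by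
  have h1ω : (0:ℝ) < 1 + ω := by linarith
  have hsω : (0:ℝ) < Real.sqrt ω := Real.sqrt_pos.mpr hω
  have hs1ω : (0:ℝ) < Real.sqrt (1 + ω) := Real.sqrt_pos.mpr h1ω
  set a : ℝ := (Real.sqrt (1 + ω))⁻¹
  set b : ℝ := Real.sqrt ω / Real.sqrt (1 + ω)
  have ha2 : a ^ 2 = (1 + ω)⁻¹ := by
    rw [inv_pow, Real.sq_sqrt h1ω.le]
  have hb2 : b ^ 2 = ω / (1 + ω) := by
    rw [div_pow, Real.sq_sqrt hω.le, Real.sq_sqrt h1ω.le]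
  have hab : a ^ 2 + b ^ 2 = 1 := by
    rw [ha2, hb2]; field_simp
  set c₁ : ℝ := σ * Real.sqrt (1 + ω)
  set c₂ : ℝ := σ * Real.sqrt (1 + ω) / Real.sqrt ω
  -- the target map factors through the rotation
  have hcomp : (fun p : ℝ × ℝ =>
        (θ + σ * p.1 + Real.sqrt ω * σ * p.2,
         θ + σ * p.1 - (σ / Real.sqrt ω) * p.2))
      = (fun q : ℝ × ℝ => (θ + c₁ * q.1, θ + c₂ * q.2)) ∘
        (fun p : ℝ × ℝ => (a * p.1 + b * p.2, b * p.1 - a * p.2)) := by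
    funext p
    simp only [Function.comp_apply, Prod.mk.injEq, a, b, c₁, c₂]
    constructor
    · field_simp
      ring
    · field_simp
      ring
  have hmeasR : Measurable (fun p : ℝ × ℝ => (a * p.1 + b * p.2, b * p.1 - a * p.2)) :=
    ((measurable_fst.const_mul a).add (measurable_snd.const_mul b)).prod
      ((measurable_fst.const_mul b).sub (measurable_snd.const_mul a))
  have hmeasG : Measurable (fun q : ℝ × ℝ => (θ + c₁ * q.1, θ + c₂ * q.2)) :=
    (measurable_fst.const_mul c₁ |>.const_add θ).prod
      (measurable_snd.const_mul c₂ |>.const_add θ)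
  rw [hcomp, ← Measure.map_map hmeasG hmeasR, gaussian_rot a b hab]
  -- now the affine product map
  have hmap1 : ∀ c : ℝ, Measure.map (fun x : ℝ => θ + c * x) (gaussianReal 0 1)
      = gaussianReal θ (NNReal.mk (c ^ 2) (sq_nonneg c) * 1) := by
    intro c
    have : (fun x : ℝ => θ + c * x) = (fun x : ℝ => θ + x) ∘ (fun x : ℝ => c * x) := rfl
    rw [this, ← Measure.map_map (measurable_const_add θ) (measurable_const_mul c),
      gaussianReal_map_const_mul c, gaussianReal_map_const_add θ]
    norm_num
  have hprodmap : ((fun q : ℝ × ℝ => (θ + c₁ * q.1, θ + c₂ * q.2)) : ℝ × ℝ → ℝ × ℝ)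
      = Prod.map (fun x : ℝ => θ + c₁ * x) (fun x : ℝ => θ + c₂ * x) := rfl
  rw [hprodmap,
    ← Measure.map_prod_map _ _ ((measurable_const_mul c₁).const_add θ)
      ((measurable_const_mul c₂).const_add θ),
    hmap1 c₁, hmap1 c₂]
  congr 1
  · congr 1
    rw [mul_one]
    apply NNReal.coe_injective
    simp only [NNReal.coe_mk]
    rw [Real.coe_toNNReal _ (by positivity)]
    simp only [c₁]
    rw [mul_pow, Real.sq_sqrt h1ω.le]
    ring
  · congr 1
    rw [mul_one]
    apply NNReal.coe_injective
    simp only [NNReal.coe_mk]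
    rw [Real.coe_toNNReal _ (by positivity)]
    simp only [c₂]
    rw [div_pow, mul_pow, Real.sq_sqrt h1ω.le, Real.sq_sqrt hω.le]
    field_simp
    ring
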